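/- Let 0 < s < 1, λ > 0, let u be a continuous bounded function on ℝ^N with u ≥ 0, u(x₀) = 0 at some point x₀, and suppose (-Δ)^s u + λ u ≥ 0 pointwise at x₀ (with (-Δ)^s u(x₀) defined by the singular integral). If u is not identically zero, then (-Δ)^s u(x₀) + λ u(x₀) < 0, a contradiction; hence either u > 0 everywhere or u ≡ 0. -/

import Mathlib

open MeasureTheory Real

/-- Strong maximum principle for the fractional Laplacian: a nonnegative bounded
continuous function satisfying `(-Δ)^s u + λ u ≥ 0` pointwise at each of its zeros
is either everywhere positive or identically zero. -/
theorem stmt_14 (N : ℕ) (s lam : ℝ) (hs0 : 0 < s) (hs1 : s < 1) (hlam : 0 < lam)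
    (u : EuclideanSpace ℝ (Fin N) → ℝ) (huc : Continuous u)
    (hub : ∃ M : ℝ, ∀ x, |u x| ≤ M) (hu0 : ∀ x, 0 ≤ u x)
    (hint : ∀ x : EuclideanSpace ℝ (Fin N), u x = 0 →
      Integrable (fun y : EuclideanSpace ℝ (Fin N) => u y / ‖x - y‖ ^ ((N : ℝ) + 2 * s)))
    (hsuper : ∀ x : EuclideanSpace ℝ (Fin N), u x = 0 →
      0 ≤ (∫ y : EuclideanSpace ℝ (Fin N),
            (u x - u y) / ‖x - y‖ ^ ((N : ℝ) + 2 * s)) + lam * u x) :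
    (∀ x, 0 < u x) ∨ u = 0 := by
  by_cases h : ∀ x, 0 < u x
  · exact Or.inl h
  push_neg at h
  obtain ⟨x₀, hx₀le⟩ := h
  have hx₀ : u x₀ = 0 := le_antisymm hx₀le (hu0 x₀)
  right
  rcases Nat.eq_zero_or_pos N with hN | hN
  · -- subsingleton case
    subst hN
    funext x
    have : x = x₀ := Subsingleton.elim x x₀
    simp [this, hx₀]
  · haveI : Nontrivial (EuclideanSpace ℝ (Fin N)) := by
      refine ⟨0, EuclideanSpace.single ⟨0, hN⟩ 1, ?_⟩
      intro hc
      have := congrArg (fun v : EuclideanSpace ℝ (Fin N) => v ⟨0, hN⟩) hc.symm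
      simp [EuclideanSpace.single] at this
    have hI := hint x₀ hx₀
    have hnonneg : ∀ y, 0 ≤ u y / ‖x₀ - y‖ ^ ((N : ℝ) + 2 * s) := fun y =>
      div_nonneg (hu0 y) (Real.rpow_nonneg (norm_nonneg _) _)
    have hs := hsuper x₀ hx₀
    have hneg : (∫ y : EuclideanSpace ℝ (Fin N),
        (u x₀ - u y) / ‖x₀ - y‖ ^ ((N : ℝ) + 2 * s)) =
        - ∫ y : EuclideanSpace ℝ (Fin N), u y / ‖x₀ - y‖ ^ ((N : ℝ) + 2 * s) := by
      rw [← integral_neg]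
      congr 1
      funext y
      rw [hx₀]
      ring
    rw [hneg, hx₀, mul_zero, add_zero, le_neg, neg_zero] at hs
    have hge : 0 ≤ ∫ y : EuclideanSpace ℝ (Fin N), u y / ‖x₀ - y‖ ^ ((N : ℝ) + 2 * s) :=
      integral_nonneg hnonneg
    have hzero : (∫ y : EuclideanSpace ℝ (Fin N), u y / ‖x₀ - y‖ ^ ((N : ℝ) + 2 * s)) = 0 :=
      le_antisymm hs hge
    have hae : (fun y : EuclideanSpace ℝ (Fin N) => u y / ‖x₀ - y‖ ^ ((N : ℝ) + 2 * s))
        =ᵐ[volume] 0 := by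
      rw [← integral_eq_zero_iff_of_nonneg hnonneg hI]
      exact hzero
    have hne : ∀ᵐ y : EuclideanSpace ℝ (Fin N), y ≠ x₀ := by
      rw [ae_iff]
      simpa using measure_singleton x₀
    have huae : u =ᵐ[volume] 0 := by
      filter_upwards [hae, hne] with y hy hyne
      have hnorm : (0:ℝ) < ‖x₀ - y‖ := by
        rw [norm_pos_iff, sub_ne_zero]
        exact fun hc => hyne hc.symm
      have hpow : (0:ℝ) < ‖x₀ - y‖ ^ ((N : ℝ) + 2 * s) := Real.rpow_pos_of_pos hnorm _
      have : u y / ‖x₀ - y‖ ^ ((N : ℝ) + 2 * s) = 0 := hy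
      simpa [div_eq_zero_iff, hpow.ne'] using this
    exact (huc.ae_eq_iff_eq volume continuous_const).mp huae
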